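/- Let F: ℕ → {−1,1}, θ = 2π Σ_{i=0}^∞ F(i)/8^{i+2}, and φ_j = 8^{j+1}θ + π/4 (mod 2π). If F(j) = 1 then sin²(φ_j) ≥ 0.98, and if F(j) = −1 then cos²(φ_j) ≥ 0.98. -/

import Mathlib

open Real

set_option maxHeartbeats 1000000

theorem stmt_15 (F : ℕ → ℝ) (hF : ∀ i, F i = 1 ∨ F i = -1) (j : ℕ)
    (θ φ : ℝ) (hθ : θ = 2 * π * ∑' i : ℕ, F i / 8 ^ (i + 2))
    (hφ : φ = 8 ^ (j + 1) * θ + π / 4) :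
    (F j = 1 → Real.sin φ ^ 2 ≥ 0.98) ∧ (F j = -1 → Real.cos φ ^ 2 ≥ 0.98) := by
  have habs : ∀ i, |F i| = 1 := by intro i; rcases hF i with h | h <;> simp [h]
  have hg : Summable (fun i : ℕ => (1/8:ℝ)^(i+2)) := by
    have h0 : Summable (fun i : ℕ => (1/8:ℝ)^i) :=
      summable_geometric_of_lt_one (by norm_num) (by norm_num)
    exact (summable_nat_add_iff 2).mpr h0
  have habs_eq : ∀ i : ℕ, |F i / 8 ^ (i + 2)| = (1/8:ℝ)^(i+2) := by
    intro i
    rw [abs_div, habs, div_pow]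
    norm_num
  have hsum : Summable (fun i : ℕ => F i / 8 ^ (i + 2)) := by
    apply Summable.of_abs
    simpa [habs_eq] using hg
  -- tail
  set T : ℝ := ∑' i : ℕ, F (i + (j+1)) / 8 ^ (i + (j+1) + 2) with hT
  have hsplit := Summable.sum_add_tsum_nat_add (f := fun i : ℕ => F i / 8 ^ (i + 2)) (j+1) hsum
  have hsumrange : ∑ i ∈ Finset.range (j+1), F i / 8 ^ (i + 2)
      = (∑ i ∈ Finset.range j, F i / 8 ^ (i + 2)) + F j / 8 ^ (j+2) := by
    rw [Finset.sum_range_succ]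
  -- integer part
  obtain ⟨n, hn⟩ : ∃ n : ℤ, (8:ℝ)^(j+1) * ∑ i ∈ Finset.range j, F i / 8 ^ (i + 2) = n := by
    refine ⟨∑ i ∈ Finset.range j, (if F i = 1 then (8:ℤ)^(j-1-i) else -(8:ℤ)^(j-1-i)), ?_⟩
    rw [Finset.mul_sum]
    push_cast
    apply Finset.sum_congr rfl
    intro i hi
    have hij : i < j := Finset.mem_range.mp hi
    have h8 : (8:ℝ)^(j+1) = 8^(i+2) * 8^(j-1-i) := by
      rw [← pow_add]; congr 1; omega
    have h0 : (8:ℝ)^(i+2) ≠ 0 := by positivity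
    rcases hF i with h | h <;> simp [h, h8] <;> norm_num <;> field_simp <;> ring
  -- tail bound
  have htail_sum : Summable (fun i : ℕ => F (i + (j+1)) / 8 ^ (i + (j+1) + 2)) :=
    (summable_nat_add_iff (j+1)).mpr hsum
  have htail_abs : Summable (fun i : ℕ => |F (i + (j+1)) / 8 ^ (i + (j+1) + 2)|) := by
    have h := (summable_nat_add_iff (k := (j+1)) (f := fun i : ℕ => (1/8:ℝ)^(i+2))).mpr hg
    exact h.congr (fun i => (habs_eq (i + (j+1))).symm)
  have hTb : |T| ≤ (1/8:ℝ)^(j+3) * (8/7) := by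
    have h1 : |T| ≤ ∑' i : ℕ, |F (i + (j+1)) / 8 ^ (i + (j+1) + 2)| := by
      have := norm_tsum_le_tsum_norm (f := fun i : ℕ => F (i + (j+1)) / 8 ^ (i + (j+1) + 2))
        (by simpa only [Real.norm_eq_abs] using htail_abs)
      simpa only [Real.norm_eq_abs] using this
    have h2 : (∑' i : ℕ, |F (i + (j+1)) / 8 ^ (i + (j+1) + 2)|)
        = (1/8:ℝ)^(j+3) * ∑' i : ℕ, (1/8:ℝ)^i := by
      rw [← tsum_mul_left]
      congr 1; funext i
      rw [habs_eq]
      rw [show i + (j+1) + 2 = (j+3) + i by omega, pow_add]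
    have h3 : ∑' i : ℕ, (1/8:ℝ)^i = 8/7 := by
      rw [tsum_geometric_of_lt_one (by norm_num) (by norm_num)]; norm_num
    calc |T| ≤ _ := h1
      _ = (1/8:ℝ)^(j+3) * (8/7) := by rw [h2, h3]
  -- remainder
  set R : ℝ := 2 * π * (8:ℝ)^(j+1) * T with hR
  have hRb : |R| ≤ π / 28 := by
    have hπ : 0 < π := pi_pos
    have : |R| = 2 * π * (8:ℝ)^(j+1) * |T| := by
      rw [hR, abs_mul]
      rw [abs_of_nonneg (by positivity : (0:ℝ) ≤ 2 * π * (8:ℝ)^(j+1))]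
    rw [this]
    have h8 : (8:ℝ)^(j+1) * ((1/8:ℝ)^(j+3) * (8/7)) = 1/56 := by
      rw [div_pow, one_pow]
      rw [show j + 3 = (j+1) + 2 by omega, pow_add]
      field_simp
      ring
    calc 2 * π * (8:ℝ)^(j+1) * |T| ≤ 2 * π * (8:ℝ)^(j+1) * ((1/8:ℝ)^(j+3) * (8/7)) := by
          apply mul_le_mul_of_nonneg_left hTb (by positivity)
      _ = 2 * π * (1/56) := by rw [mul_assoc, h8]
      _ = π / 28 := by ring
  -- decompose φ
  have hphi : φ = (F j * (π/4) + π/4 + R) + n * (2 * π) := by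
    rw [hφ, hθ, ← hsplit, hsumrange]
    rw [hR]
    have h0 : (8:ℝ)^(j+2) ≠ 0 := by positivity
    have hq : (8:ℝ)^(j+1) * (F j / 8^(j+2)) = F j / 8 := by
      rw [show j+2 = (j+1)+1 by omega, pow_succ]
      field_simp
      ring
    have hπ4 : 2 * π * (F j / 8) = F j * (π/4) := by ring
    have : (8:ℝ)^(j+1) * (2 * π * ((∑ i ∈ Finset.range j, F i / 8 ^ (i + 2)) + F j / 8^(j+2) + T))
        = 2 * π * n + F j * (π/4) + 2 * π * (8:ℝ)^(j+1) * T := by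
      rw [mul_add, mul_add, mul_add, mul_add]
      rw [show (8:ℝ)^(j+1) * (2 * π * ∑ i ∈ Finset.range j, F i / 8 ^ (i + 2))
          = 2 * π * ((8:ℝ)^(j+1) * ∑ i ∈ Finset.range j, F i / 8 ^ (i + 2)) by ring, hn]
      rw [show (8:ℝ)^(j+1) * (2 * π * (F j / 8^(j+2))) = 2 * π * ((8:ℝ)^(j+1) * (F j / 8^(j+2))) by ring,
        hq, hπ4]
      ring
    rw [this]; ring
  -- numeric bound on cos R
  have hcosR : Real.cos R ≥ 0.99 := by
    have h1 : (1:ℝ) - R^2/2 ≤ Real.cos R := Real.one_sub_sq_div_two_le_cos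
    have h2 : R^2 ≤ (π/28)^2 := by
      rw [← sq_abs]
      apply pow_le_pow_left₀ (abs_nonneg R) hRb
    have hπ : π < 3.15 := pi_lt_d2
    have hπ0 : 0 < π := pi_pos
    nlinarith
  constructor
  · intro h1
    have : φ = (π/2 + R) + n * (2 * π) := by rw [hphi, h1]; ring
    rw [this, sin_add_int_mul_two_pi, show π/2 + R = R + π/2 by ring, sin_add_pi_div_two]
    nlinarith
  · intro h1
    have : φ = R + n * (2 * π) := by rw [hphi, h1]; ring
    rw [this, cos_add_int_mul_two_pi]
    nlinarith
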